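/- For a symmetric tensor T ∈ Sym(n,d), the spectral norm is attained on the diagonal: max over unit vectors x₁,…,x_d of |⟨T, x₁⊗…⊗x_d⟩| equals max over unit vectors x of |⟨T, x^{⊗d}⟩|. -/

import Mathlib

noncomputable section

/-- The decomposable tensor `x₁ ⊗ ⋯ ⊗ x_d`, as a multi-indexed array. -/
def dtens {ι : Type*} [Fintype ι] {n : ι → ℕ} (x : ∀ j, Fin (n j) → ℝ) :
    (∀ j, Fin (n j)) → ℝ :=
  fun idx => ∏ j, x j (idx j)

/-- Entrywise inner product of tensors. -/
def tinner {ι : Type*} [Fintype ι] [DecidableEq ι] {n : ι → ℕ}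
    (S T : (∀ j, Fin (n j)) → ℝ) : ℝ :=
  ∑ idx, S idx * T idx

/-- Hilbert–Schmidt norm of a tensor. -/
def hsNorm {ι : Type*} [Fintype ι] [DecidableEq ι] {n : ι → ℕ}
    (T : (∀ j, Fin (n j)) → ℝ) : ℝ :=
  Real.sqrt (∑ idx, T idx ^ 2)

/-- `v` is a unit vector in `ℝ^m`. -/
def isUnitVec {m : ℕ} (v : Fin m → ℝ) : Prop := ∑ i, v i ^ 2 = 1

/-- The spectral (`(∞,2)`-Schatten) norm of a tensor: the supremum of
`|⟨T, x₁ ⊗ ⋯ ⊗ x_d⟩|` over unit vectors `x_j`. -/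
def specNorm {ι : Type*} [Fintype ι] [DecidableEq ι] {n : ι → ℕ}
    (T : (∀ j, Fin (n j)) → ℝ) : ℝ :=
  sSup {r | ∃ x : ∀ j, Fin (n j) → ℝ, (∀ j, isUnitVec (x j)) ∧ r = |tinner T (dtens x)|}

open Finset Matrix

namespace Banach

variable {n d : ℕ}

/-- slot-`i` contraction of `T` against all components of `x` except slot `i`. -/
def contr (T : (Fin d → Fin n) → ℝ) (i : Fin d) (x : Fin d → Fin n → ℝ) : Fin n → ℝ :=
  fun k => ∑ idx : Fin d → Fin n,
    if idx i = k then T idx * ∏ j ∈ Finset.univ.erase i, x j (idx j) else 0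

lemma tinner_update (T : (Fin d → Fin n) → ℝ) (x : Fin d → Fin n → ℝ) (i : Fin d)
    (u : Fin n → ℝ) :
    tinner T (dtens (Function.update x i u)) = contr T i x ⬝ᵥ u := by
  have hd : ∀ idx : Fin d → Fin n, dtens (Function.update x i u) idx
      = u (idx i) * ∏ j ∈ Finset.univ.erase i, x j (idx j) := by
    intro idx
    show (∏ j, Function.update x i u j (idx j)) = _
    rw [← Finset.mul_prod_erase Finset.univ _ (Finset.mem_univ i), Function.update_self]
    congr 1
    exact Finset.prod_congr rfl fun j hj => by
      rw [Function.update_of_ne (Finset.ne_of_mem_erase hj)]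
  unfold tinner dotProduct contr
  simp only [Finset.sum_mul, ite_mul, zero_mul]
  rw [Finset.sum_comm]
  refine Finset.sum_congr rfl fun idx _ => ?_
  simp only [hd, Finset.sum_ite_eq, Finset.mem_univ, if_true]
  ring


lemma tinner_comp (T : (Fin d → Fin n) → ℝ)
    (hsym : ∀ (σ : Equiv.Perm (Fin d)) (idx : Fin d → Fin n), T (idx ∘ σ) = T idx)
    (σ : Equiv.Perm (Fin d)) (x : Fin d → Fin n → ℝ) :
    tinner T (dtens (x ∘ σ)) = tinner T (dtens x) := by
  have h1 : ∀ idx : Fin d → Fin n, dtens (x ∘ σ) idx = dtens x (idx ∘ σ.symm) := by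
    intro idx
    show (∏ j, x (σ j) (idx j)) = ∏ j, x j (idx (σ.symm j))
    exact Fintype.prod_equiv σ _ _ (fun j => by simp)
  unfold tinner
  simp only [h1]
  refine Fintype.sum_equiv
    ⟨fun idx => idx ∘ σ.symm, fun idx => idx ∘ σ,
      fun idx => funext fun j => by simp, fun idx => funext fun j => by simp⟩ _ _ fun idx => ?_
  simp only [Equiv.coe_fn_mk]
  rw [hsym σ.symm idx]

lemma update_update_swap (x : Fin d → Fin n → ℝ) {i j : Fin d} (hij : i ≠ j) :
    Function.update (Function.update x i (x j)) j (x i) = x ∘ (Equiv.swap i j) := by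
  funext k
  rcases eq_or_ne k j with rfl | hkj
  · simp [Equiv.swap_apply_right]
  · rcases eq_or_ne k i with rfl | hki
    · simp [Function.update_of_ne hij, Equiv.swap_apply_left]
    · simp [Function.update_of_ne hkj, Function.update_of_ne hki,
        Equiv.swap_apply_of_ne_of_ne hki hkj]

lemma dot_self_eq (v : Fin n → ℝ) : v ⬝ᵥ v = ∑ k, v k ^ 2 := by
  simp [dotProduct, sq]

lemma unit_dot {v : Fin n → ℝ} (h : isUnitVec v) : v ⬝ᵥ v = 1 := by
  rw [dot_self_eq]; exact h

lemma expand_add (a b : Fin n → ℝ) :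
    (a + b) ⬝ᵥ (a + b) = a ⬝ᵥ a + 2 * (a ⬝ᵥ b) + b ⬝ᵥ b := by
  simp [add_dotProduct, dotProduct_add, dotProduct_comm b a]
  ring

/-- First-order condition at a maximizer. -/
lemma contr_eq_smul (T : (Fin d → Fin n) → ℝ) (x : Fin d → Fin n → ℝ)
    (i : Fin d) (M : ℝ)
    (hx : ∀ j, isUnitVec (x j))
    (hfx : tinner T (dtens x) = M)
    (hb : ∀ w : Fin d → Fin n → ℝ, (∀ j, isUnitVec (w j)) → |tinner T (dtens w)| ≤ M) :
    contr T i x = M • x i := by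
  set a := contr T i x with ha
  have h1 : a ⬝ᵥ x i = M := by
    rw [← tinner_update, Function.update_eq_self, hfx]
  have h2 : ∀ u : Fin n → ℝ, isUnitVec u → |a ⬝ᵥ u| ≤ M := by
    intro u hu
    rw [← tinner_update]
    refine hb _ fun j => ?_
    rcases eq_or_ne j i with rfl | hji
    · simpa using hu
    · rw [Function.update_of_ne hji]; exact hx j
  have hM0 : 0 ≤ M := by
    have := hb x hx
    rw [hfx] at this
    exact (abs_nonneg M).trans this
  have h3 : (∑ k, a k ^ 2) ≤ M ^ 2 := by
    rcases eq_or_lt_of_le (Finset.sum_nonneg fun k _ => sq_nonneg (a k)) with hz | hz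
    · rw [← hz]; positivity
    · set t := Real.sqrt (∑ k, a k ^ 2) with htdef
      have ht0 : 0 < t := Real.sqrt_pos.2 hz
      have ht2 : t ^ 2 = ∑ k, a k ^ 2 := Real.sq_sqrt (le_of_lt hz)
      have hu : isUnitVec (t⁻¹ • a) := by
        unfold isUnitVec
        simp only [Pi.smul_apply, smul_eq_mul, mul_pow, ← Finset.mul_sum]
        rw [← ht2]
        field_simp
      have hdot : a ⬝ᵥ (t⁻¹ • a) = t := by
        rw [dotProduct_smul, smul_eq_mul, dot_self_eq, ← ht2]
        field_simp [sq]
      have := h2 _ hu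
      rw [hdot, abs_of_nonneg ht0.le] at this
      calc (∑ k, a k ^ 2) = t ^ 2 := ht2.symm
        _ ≤ M ^ 2 := by nlinarith
  have h4 : ∑ k, (a k - M * x i k) ^ 2 ≤ 0 := by
    have hexp : ∑ k, (a k - M * x i k) ^ 2
        = (∑ k, a k ^ 2) - 2 * M * (a ⬝ᵥ x i) + M ^ 2 * (∑ k, x i k ^ 2) := by
      rw [dotProduct, Finset.mul_sum, Finset.mul_sum, ← Finset.sum_sub_distrib,
        ← Finset.sum_add_distrib]
      exact Finset.sum_congr rfl fun k _ => by ring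
    rw [hexp, h1, hx i]
    nlinarith
  have h5 : ∑ k, (a k - M * x i k) ^ 2 = 0 :=
    le_antisymm h4 (Finset.sum_nonneg fun k _ => sq_nonneg _)
  funext k
  have := (Finset.sum_eq_zero_iff_of_nonneg (fun k _ => sq_nonneg (a k - M * x i k))).1 h5
    k (Finset.mem_univ k)
  have hk : a k - M * x i k = 0 := by
    exact pow_eq_zero_iff (n := 2) (by norm_num) |>.1 this
  have : a k = M * x i k := by linarith
  simpa [Pi.smul_apply, smul_eq_mul] using this


lemma unit_update {X : Fin d → Fin n → ℝ} (hX : ∀ j, isUnitVec (X j))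
    {i j : Fin d} {u v : Fin n → ℝ} (hu : isUnitVec u) (hv : isUnitVec v) :
    ∀ p, isUnitVec (Function.update (Function.update X i u) j v p) := by
  intro p
  rcases eq_or_ne p j with rfl | hpj
  · simpa using hv
  · rw [Function.update_of_ne hpj]
    rcases eq_or_ne p i with rfl | hpi
    · simpa using hu
    · rw [Function.update_of_ne hpi]; exact hX p

lemma unit_neg {u : Fin n → ℝ} (hu : isUnitVec u) : isUnitVec (-u) := by
  unfold isUnitVec at *
  simpa [neg_sq] using hu

/-- Banach's key lemma: a `Φ`-maximal maximizer of `|⟨T, ·⟩|` has all components equal. -/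
lemma key (T : (Fin d → Fin n) → ℝ)
    (hsym : ∀ (σ : Equiv.Perm (Fin d)) (idx : Fin d → Fin n), T (idx ∘ σ) = T idx)
    (M : ℝ) (X : Fin d → Fin n → ℝ)
    (hXC : ∀ j, isUnitVec (X j))
    (hfX : tinner T (dtens X) = M)
    (hb : ∀ w : Fin d → Fin n → ℝ, (∀ j, isUnitVec (w j)) → |tinner T (dtens w)| ≤ M)
    (hPhi : ∀ w : Fin d → Fin n → ℝ, (∀ j, isUnitVec (w j)) → |tinner T (dtens w)| = M →
      (∑ p, w p) ⬝ᵥ (∑ p, w p) ≤ (∑ p, X p) ⬝ᵥ (∑ p, X p))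
    (i j : Fin d) : X i = X j := by
  by_contra hne
  have hij : i ≠ j := by rintro rfl; exact hne rfl
  have hM0 : 0 ≤ M := by
    have := hb X hXC; rw [hfX] at this; exact (abs_nonneg M).trans this
  have hfo : ∀ p, contr T p X = M • X p := fun p => contr_eq_smul T X p M hXC hfX hb
  have hfupd : ∀ (p : Fin d) (u : Fin n → ℝ),
      tinner T (dtens (Function.update X p u)) = M * (X p ⬝ᵥ u) := by
    intro p u
    rw [tinner_update, hfo p, smul_dotProduct, smul_eq_mul]
  have hii : X i ⬝ᵥ X i = 1 := unit_dot (hXC i)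
  have hjj : X j ⬝ᵥ X j = 1 := unit_dot (hXC j)
  set c : ℝ := X i ⬝ᵥ X j with hc
  have hji : X j ⬝ᵥ X i = c := dotProduct_comm _ _
  -- c < 1
  have hc1 : c < 1 := by
    have hdiff : (0:ℝ) < ∑ k, (X i k - X j k) ^ 2 := by
      rcases eq_or_lt_of_le (Finset.sum_nonneg fun k _ => sq_nonneg (X i k - X j k)) with hz | hz
      · exfalso
        apply hne
        funext k
        have := (Finset.sum_eq_zero_iff_of_nonneg (fun k _ => sq_nonneg (X i k - X j k))).1
          hz.symm k (Finset.mem_univ k)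
        have := pow_eq_zero_iff (n := 2) (by norm_num) |>.1 this
        linarith
      · exact hz
    have hexp : ∑ k, (X i k - X j k) ^ 2 = 2 - 2 * c := by
      have h1 : ∑ k, (X i k - X j k) ^ 2
          = (∑ k, X i k ^ 2) - 2 * (∑ k, X i k * X j k) + ∑ k, X j k ^ 2 := by
        rw [Finset.mul_sum, ← Finset.sum_sub_distrib, ← Finset.sum_add_distrib]
        exact Finset.sum_congr rfl fun k _ => by ring
      rw [h1, hXC i, hXC j]
      have : (∑ k, X i k * X j k) = c := rfl
      rw [this]; ring
    linarith
  -- set-up: w, s2, R2 and sums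
  set w : Fin n → ℝ := X i + X j with hw
  set s2 : ℝ := w ⬝ᵥ w with hs2def
  have hs2 : s2 = 2 + 2 * c := by
    rw [hs2def, hw, expand_add, hii, hjj, hc]; ring
  set R2 : Fin n → ℝ := ∑ p ∈ (Finset.univ.erase j).erase i, X p with hR2
  have hmemi : i ∈ Finset.univ.erase j := Finset.mem_erase.2 ⟨hij, Finset.mem_univ i⟩
  have hsum : ∀ u v : Fin n → ℝ,
      (∑ p, Function.update (Function.update X i u) j v p) = v + (u + R2) := by
    intro u v
    rw [Finset.sum_update_of_mem (Finset.mem_univ j), Finset.sdiff_singleton_eq_erase]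
    congr 1
    rw [Finset.sum_update_of_mem hmemi, Finset.sdiff_singleton_eq_erase]
  have hSX : (∑ p, X p) = X j + (X i + R2) := by
    rw [← Finset.add_sum_erase _ X (Finset.mem_univ j), ← Finset.add_sum_erase _ X hmemi]
  have habs : ∀ r : ℝ, r = M ∨ r = -M → |r| = M := by
    rintro r (rfl | rfl)
    · exact abs_of_nonneg hM0
    · rw [abs_neg]; exact abs_of_nonneg hM0
  -- value of f on single updates, reformulated through double updates
  have hupdj : ∀ v : Fin n → ℝ,
      Function.update (Function.update X i (X i)) j v = Function.update X j v := by
    intro v; rw [Function.update_eq_self]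
  have hupdi : Function.update (Function.update X i (X j)) j (X j)
      = Function.update X i (X j) := by
    funext k
    rcases eq_or_ne k j with rfl | hkj
    · rw [Function.update_self, Function.update_of_ne (Ne.symm hij)]
    · rw [Function.update_of_ne hkj]
  have hs2nonneg : 0 ≤ s2 := by
    rw [hs2def, dot_self_eq]; exact Finset.sum_nonneg fun k _ => sq_nonneg _
  rcases eq_or_lt_of_le hs2nonneg with hzero | hpos
  · -- degenerate case : X j = - X i
    have hc_eq : c = -1 := by rw [hs2] at hzero; linarith
    have hXj : X j = -X i := by
      funext k
      have h0 : ∑ k, w k ^ 2 = 0 := by rw [← dot_self_eq, ← hs2def, ← hzero]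
      have := (Finset.sum_eq_zero_iff_of_nonneg (fun k _ => sq_nonneg (w k))).1 h0
        k (Finset.mem_univ k)
      have := pow_eq_zero_iff (n := 2) (by norm_num) |>.1 this
      have hwk : X i k + X j k = 0 := this
      simp only [Pi.neg_apply]
      linarith
    -- the two flipped configurations
    have hfA : tinner T (dtens (Function.update (Function.update X i (X i)) j (X i))) = -M := by
      rw [hupdj, hfupd j (X i), hji, hc_eq]; ring
    have hfB : tinner T (dtens (Function.update (Function.update X i (X j)) j (X j))) = -M := by
      rw [hupdi, hfupd i (X j), ← hc, hc_eq]; ring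
    have hPA := hPhi _ (unit_update hXC (hXC i) (hXC i)) (by rw [hfA]; exact habs _ (Or.inr rfl))
    have hPB := hPhi _ (unit_update hXC (hXC j) (hXC j)) (by rw [hfB]; exact habs _ (Or.inr rfl))
    rw [hsum, hSX] at hPA hPB
    set u : Fin n → ℝ := X i with hu
    have e0 : X j + (X i + R2) = R2 := by rw [hXj]; exact neg_add_cancel_left _ _
    have e1 : u + (u + R2) = (u + u) + R2 := by rw [add_assoc]
    have e2 : X j + (X j + R2) = -(u + u) + R2 := by rw [hXj]; funext k; simp; ring
    rw [e0, e1] at hPA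
    rw [e0, e2] at hPB
    have hA' : ((u + u) + R2) ⬝ᵥ ((u + u) + R2)
        = 4 + 2 * (2 * (u ⬝ᵥ R2)) + R2 ⬝ᵥ R2 := by
      rw [expand_add, expand_add, add_dotProduct, hu, hii]; ring_nf
    have hB' : (-(u + u) + R2) ⬝ᵥ (-(u + u) + R2)
        = 4 - 2 * (2 * (u ⬝ᵥ R2)) + R2 ⬝ᵥ R2 := by
      rw [expand_add, neg_dotProduct, dotProduct_neg, neg_dotProduct,
        expand_add, add_dotProduct, hu, hii]; ring_nf
    rw [hA'] at hPA
    rw [hB'] at hPB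
    linarith
  · -- main case
    set s : ℝ := Real.sqrt s2 with hsdef
    have hs0 : 0 < s := Real.sqrt_pos.2 hpos
    have hss : s * s = s2 := Real.mul_self_sqrt hpos.le
    have hss2 : s * s = 2 + 2 * c := by rw [hss, hs2]
    set z : Fin n → ℝ := s⁻¹ • w with hz
    have hzunit : isUnitVec z := by
      unfold isUnitVec
      have h1 : ∑ k, z k ^ 2 = s⁻¹ ^ 2 * ∑ k, w k ^ 2 := by
        rw [Finset.mul_sum]
        exact Finset.sum_congr rfl fun k _ => by
          rw [hz]; simp [Pi.smul_apply, smul_eq_mul, mul_pow]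
      rw [h1, ← dot_self_eq, ← hs2def, ← hss]
      field_simp
    have hzw : ∀ a : Fin n → ℝ, a ⬝ᵥ z = s⁻¹ * (a ⬝ᵥ w) := by
      intro a; rw [hz, dotProduct_smul, smul_eq_mul]
    have hfXjz : tinner T (dtens (Function.update X j z)) = M * (s⁻¹ * (1 + c)) := by
      rw [hfupd j z, hzw, hw, dotProduct_add, hji, hjj]; ring
    have hfXiXj : tinner T (dtens (Function.update X i (X j))) = M * c := by
      rw [hfupd i (X j), ← hc]
    have hswap : tinner T (dtens (Function.update (Function.update X i (X j)) j (X i))) = M := by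
      rw [update_update_swap X hij, tinner_comp T hsym, hfX]
    have hBj : tinner T (dtens (Function.update (Function.update X i (X j)) j z))
        = s⁻¹ * (M + M * c) := by
      rw [tinner_update, hzw, hw, dotProduct_add, ← tinner_update, ← tinner_update,
        hswap, hupdi, hfXiXj]
    have hcomm : Function.update (Function.update X i z) j z
        = Function.update (Function.update X j z) i z := Function.update_comm hij z z X
    have hY1 : Function.update (Function.update X j z) i (X i) = Function.update X j z := by
      rw [Function.update_comm (Ne.symm hij) z (X i) X, Function.update_eq_self]
    have hY2 : Function.update (Function.update X j z) i (X j)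
        = Function.update (Function.update X i (X j)) j z :=
      Function.update_comm (Ne.symm hij) z (X j) X
    have hfY : tinner T (dtens (Function.update (Function.update X i z) j z)) = M := by
      rw [hcomm, tinner_update, hzw, hw, dotProduct_add, ← tinner_update, ← tinner_update,
        hY1, hY2, hfXjz, hBj]
      have h4 : s⁻¹ * s⁻¹ * (2 + 2 * c) = 1 := by
        rw [← hss2]; field_simp
      linear_combination M * h4
    -- the sign-flipped configuration shows  w ⬝ᵥ R2 ≥ 0
    have hq : 0 ≤ w ⬝ᵥ R2 := by
      have hupdflip : Function.update (Function.update X i (-X i)) j (X j)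
          = Function.update X i (-X i) := by
        funext k
        rcases eq_or_ne k j with rfl | hkj
        · rw [Function.update_self, Function.update_of_ne (Ne.symm hij)]
        · rw [Function.update_of_ne hkj]
      have hfflip : tinner T (dtens (Function.update (Function.update X i (-X i)) j (-X j)))
          = M := by
        rw [tinner_update, dotProduct_neg, ← tinner_update, hupdflip,
          hfupd i (-X i), dotProduct_neg, hii]
        ring
      have hP := hPhi _ (unit_update hXC (unit_neg (hXC i)) (unit_neg (hXC j)))
        (by rw [hfflip]; exact habs _ (Or.inl rfl))
      rw [hsum, hSX] at hP
      have eL : (-X j) + ((-X i) + R2) = -w + R2 := by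
        rw [hw]; funext k; simp; ring
      have eR : X j + (X i + R2) = w + R2 := by
        rw [hw]; funext k; simp; ring
      rw [eL, eR] at hP
      simp only [expand_add, neg_dotProduct, dotProduct_neg, neg_neg] at hP
      linarith
    -- the symmetrized configuration Y
    have hPY := hPhi _ (unit_update hXC hzunit hzunit) (by rw [hfY]; exact habs _ (Or.inl rfl))
    rw [hsum, hSX] at hPY
    have eY : z + (z + R2) = (2 * s⁻¹) • w + R2 := by
      rw [hz]; funext k; simp [Pi.smul_apply]; ring
    have eR : X j + (X i + R2) = w + R2 := by
      rw [hw]; funext k; simp; ring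
    rw [eY, eR] at hPY
    simp only [expand_add, smul_dotProduct, dotProduct_smul, smul_eq_mul] at hPY
    rw [← hs2def] at hPY
    -- final contradiction
    have hs_le : s ≤ 2 := by
      by_contra hcon
      push_neg at hcon
      nlinarith
    have htge : 1 ≤ 2 * s⁻¹ := by
      rw [show (2:ℝ) * s⁻¹ = 2 / s by rw [div_eq_mul_inv]]
      exact (one_le_div hs0).2 hs_le
    have hT4 : (2 * s⁻¹) * ((2 * s⁻¹) * s2) = 4 := by
      rw [← hss]; field_simp; ring
    have hqt : w ⬝ᵥ R2 ≤ (2 * s⁻¹) * (w ⬝ᵥ R2) := by nlinarith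
    nlinarith [hPY, hT4, hqt, hs2, hc1]


lemma tinner_neg (T : (Fin d → Fin n) → ℝ) (S : (Fin d → Fin n) → ℝ) :
    tinner (fun idx => -T idx) S = -tinner T S := by
  unfold tinner
  rw [← Finset.sum_neg_distrib]
  exact Finset.sum_congr rfl fun idx _ => by ring

lemma continuous_f (T : (Fin d → Fin n) → ℝ) :
    Continuous fun x : Fin d → Fin n → ℝ => tinner T (dtens x) := by
  unfold tinner dtens
  exact continuous_finset_sum _ fun idx _ => continuous_const.mul <|
    continuous_finset_prod _ fun j _ => (continuous_apply (idx j)).comp (continuous_apply j)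

lemma continuous_Phi :
    Continuous fun x : Fin d → Fin n → ℝ => (∑ p, x p) ⬝ᵥ (∑ p, x p) := by
  have h : Continuous fun x : Fin d → Fin n → ℝ => (∑ p, x p) :=
    continuous_finset_sum _ fun p _ => continuous_apply p
  unfold dotProduct
  exact continuous_finset_sum _ fun k _ =>
    ((continuous_apply k).comp h).mul ((continuous_apply k).comp h)

lemma unitSet_compact : IsCompact {v : Fin n → ℝ | isUnitVec v} := by
  have hclosed : IsClosed {v : Fin n → ℝ | isUnitVec v} := by
    have hcont : Continuous fun v : Fin n → ℝ => ∑ i, v i ^ 2 :=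
      continuous_finset_sum _ fun i _ => (continuous_apply i).pow 2
    exact isClosed_eq hcont continuous_const
  have hsub : {v : Fin n → ℝ | isUnitVec v} ⊆ Metric.closedBall 0 1 := by
    intro v hv
    rw [Metric.mem_closedBall, dist_zero_right]
    rw [pi_norm_le_iff_of_nonneg zero_le_one]
    intro k
    have h1 : v k ^ 2 ≤ 1 := by
      have h2 := Finset.single_le_sum (f := fun i => v i ^ 2)
        (fun i _ => sq_nonneg (v i)) (Finset.mem_univ k)
      rw [hv] at h2
      exact h2
    rw [Real.norm_eq_abs, ← Real.sqrt_sq_eq_abs]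
    calc Real.sqrt (v k ^ 2) ≤ Real.sqrt 1 := Real.sqrt_le_sqrt h1
      _ = 1 := Real.sqrt_one
  exact (isCompact_closedBall 0 1).of_isClosed_subset hclosed hsub

end Banach

/-- For a symmetric tensor the spectral norm is attained on the diagonal: the maximum of
`|⟨T, x₁ ⊗ ⋯ ⊗ x_d⟩|` over unit vectors `x_j` equals the maximum of `|⟨T, x^{⊗ d}⟩|` over
unit vectors `x`. -/
theorem stmt11 {n d : ℕ} (hn : 0 < n) (T : (Fin d → Fin n) → ℝ)
    (hsym : ∀ (σ : Equiv.Perm (Fin d)) (idx : Fin d → Fin n), T (idx ∘ σ) = T idx) :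
    specNorm T =
      sSup {r | ∃ x : Fin n → ℝ, isUnitVec x ∧ r = |tinner T (dtens (fun _ : Fin d => x))|} := by
  classical
  set F := fun x : Fin d → Fin n → ℝ => |tinner T (dtens x)| with hF
  have hFcont : Continuous F := (Banach.continuous_f T).abs
  set C : Set (Fin d → Fin n → ℝ) := Set.univ.pi fun _ => {v | isUnitVec v} with hC
  have hCmem : ∀ x, x ∈ C ↔ ∀ j, isUnitVec (x j) := by
    intro x
    simp [hC, Set.mem_univ_pi, Set.mem_setOf_eq]
  have hCcomp : IsCompact C := isCompact_univ_pi fun _ => Banach.unitSet_compact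
  have he : ∃ v : Fin n → ℝ, isUnitVec v := by
    refine ⟨fun k => if k = ⟨0, hn⟩ then 1 else 0, ?_⟩
    unfold isUnitVec
    rw [Finset.sum_eq_single (⟨0, hn⟩ : Fin n)]
    · simp
    · intro b _ hb; simp [hb]
    · simp
  obtain ⟨e0, he0⟩ := he
  have hCne : C.Nonempty := ⟨fun _ => e0, (hCmem _).2 fun _ => he0⟩
  obtain ⟨X0, hX0C, hX0max⟩ := hCcomp.exists_isMaxOn hCne hFcont.continuousOn
  set M := F X0 with hM
  have hbound : ∀ w : Fin d → Fin n → ℝ, (∀ j, isUnitVec (w j)) →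
      |tinner T (dtens w)| ≤ M := fun w hw => hX0max ((hCmem w).2 hw)
  set K : Set (Fin d → Fin n → ℝ) := C ∩ F ⁻¹' {M} with hK
  have hKcomp : IsCompact K := hCcomp.inter_right (isClosed_singleton.preimage hFcont)
  have hKne : K.Nonempty := ⟨X0, hX0C, rfl⟩
  obtain ⟨X, hXK, hXmax⟩ := hKcomp.exists_isMaxOn hKne Banach.continuous_Phi.continuousOn
  have hXC : ∀ j, isUnitVec (X j) := (hCmem X).1 hXK.1
  have hXF : |tinner T (dtens X)| = M := hXK.2
  have hPhi : ∀ w : Fin d → Fin n → ℝ, (∀ j, isUnitVec (w j)) → |tinner T (dtens w)| = M →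
      (∑ p, w p) ⬝ᵥ (∑ p, w p) ≤ (∑ p, X p) ⬝ᵥ (∑ p, X p) := by
    intro w hw hwF
    exact hXmax ⟨(hCmem w).2 hw, hwF⟩
  have hall : ∀ i j, X i = X j := by
    rcases abs_cases (tinner T (dtens X)) with ⟨heq, _⟩ | ⟨heq, _⟩
    · exact fun i j => Banach.key T hsym M X hXC (by rw [← hXF, heq]) hbound hPhi i j
    · -- apply the key lemma to -T
      intro i j
      refine Banach.key (fun idx => -T idx) (fun σ idx => by simp [hsym σ idx]) M X hXC ?_ ?_ ?_ i j
      · rw [Banach.tinner_neg, ← hXF, heq]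
      · intro w hw
        rw [Banach.tinner_neg, abs_neg]
        exact hbound w hw
      · intro w hw hwF
        rw [Banach.tinner_neg, abs_neg] at hwF
        exact hPhi w hw hwF
  have hexists : ∃ y : Fin n → ℝ, isUnitVec y ∧ |tinner T (dtens (fun _ : Fin d => y))| = M := by
    rcases Nat.eq_zero_or_pos d with rfl | hd
    · refine ⟨e0, he0, ?_⟩
      have hx : (fun _ : Fin 0 => e0) = X := funext fun p => p.elim0
      rw [hx]
      exact hXF
    · refine ⟨X ⟨0, hd⟩, hXC _, ?_⟩
      have hx : (fun _ : Fin d => X ⟨0, hd⟩) = X := funext fun p => hall ⟨0, hd⟩ p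
      rw [hx]
      exact hXF
  have hS1 : IsGreatest {r | ∃ x : Fin d → Fin n → ℝ,
      (∀ j, isUnitVec (x j)) ∧ r = |tinner T (dtens x)|} M := by
    constructor
    · exact ⟨X0, (hCmem X0).1 hX0C, rfl⟩
    · rintro r ⟨x, hx, rfl⟩
      exact hbound x hx
  have hS2 : IsGreatest {r | ∃ x : Fin n → ℝ,
      isUnitVec x ∧ r = |tinner T (dtens (fun _ : Fin d => x))|} M := by
    obtain ⟨y, hy, hyF⟩ := hexists
    constructor
    · exact ⟨y, hy, hyF.symm⟩
    · rintro r ⟨x, hx, rfl⟩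
      exact hbound _ fun _ => hx
  rw [specNorm, hS1.csSup_eq, hS2.csSup_eq]
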